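/- arXiv:1908.07070 — 9 statements merged into one kernel-verified Lean document; each statement's English description precedes it below -/
import Mathlib

section
/- Let H be a symmetric real n×n matrix and g ∈ ℝⁿ. If λ ∈ ℝ and u ∈ ℝⁿ satisfy the KKT conditions (H − λI)u = g and uᵀu = 1, then λ is a solution of the quadratic eigenvalue problem, i.e. det(λ²I − 2λH + H² − g gᵀ) = 0. -/
open Matrix

theorem stmt_0 (n : ℕ) (H : Matrix (Fin n) (Fin n) ℝ) (hH : H.IsSymm)
    (g : Fin n → ℝ) (lam : ℝ) (u : Fin n → ℝ)
    (hKKT : (H - lam • (1 : Matrix (Fin n) (Fin n) ℝ)).mulVec u = g)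
    (hu : u ⬝ᵥ u = 1) :
    (lam ^ 2 • (1 : Matrix (Fin n) (Fin n) ℝ) - (2 * lam) • H + H ^ 2
      - vecMulVec g g).det = 0 := by
  obtain ⟨A, hA⟩ : ∃ A : Matrix (Fin n) (Fin n) ℝ, A = H - lam • 1 := ⟨_, rfl⟩
  rw [← hA] at hKKT
  have hAsymm : Aᵀ = A := by
    rw [hA, transpose_sub, transpose_smul, transpose_one, hH.eq]
  have hgu : u ᵥ* A = g := by
    rw [← hAsymm, vecMul_transpose, hKKT]
  have hleft : A * vecMulVec u u = vecMulVec (A *ᵥ u) u := by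
    ext i j
    simp [mul_apply, vecMulVec_apply, mulVec, dotProduct, Finset.sum_mul, mul_assoc]
  have hright : vecMulVec g u * A = vecMulVec g (u ᵥ* A) := by
    ext i j
    simp [mul_apply, vecMulVec_apply, vecMul, dotProduct, Finset.mul_sum, mul_assoc,
      mul_comm, mul_left_comm]
  have hAA : A * A = lam ^ 2 • (1 : Matrix (Fin n) (Fin n) ℝ) - (2 * lam) • H + H ^ 2 := by
    rw [hA, show H ^ 2 = H * H from pow_two H, show lam ^ 2 = lam * lam from pow_two lam]
    simp only [sub_mul, mul_sub, smul_mul_assoc, mul_smul_comm, smul_smul, one_mul,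
      mul_one, two_mul, add_smul, smul_sub]
    abel
  have key : lam ^ 2 • (1 : Matrix (Fin n) (Fin n) ℝ) - (2 * lam) • H + H ^ 2
      - vecMulVec g g = A * (1 - vecMulVec u u) * A := by
    rw [mul_sub, mul_one, sub_mul, hleft, hKKT, hright, hgu, hAA]
  rw [key, det_mul, det_mul]
  have hdet0 : (1 - vecMulVec u u : Matrix (Fin n) (Fin n) ℝ).det = 0 := by
    rw [← Matrix.exists_mulVec_eq_zero_iff]
    refine ⟨u, ?_, ?_⟩
    · intro h
      rw [h] at hu
      simp at hu
    · ext i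
      simp only [sub_mulVec, one_mulVec, Pi.sub_apply, Pi.zero_apply]
      have : (vecMulVec u u) *ᵥ u = u := by
        ext i
        simp only [mulVec, vecMulVec_apply, dotProduct]
        rw [show ∑ j, u i * u j * u j = u i * ∑ j, u j * u j by
          rw [Finset.mul_sum]; exact Finset.sum_congr rfl fun j _ => mul_assoc _ _ _]
        rw [show ∑ j, u j * u j = u ⬝ᵥ u from rfl, hu, mul_one]
      rw [this]; ring
  rw [hdet0]
  ring
end

section
/- Let H be a symmetric real n×n matrix, g ∈ ℝⁿ, and λ ∈ ℝ such that H − λI is invertible. If there exists γ ≠ 0 with (λ²I − 2λH + H² − g gᵀ)γ = 0 (equivalently ((H − λI)² − g gᵀ)γ = 0), then the vector u = (H − λI)⁻¹ g satisfies (H − λI)u = g and uᵀu = 1. -/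
open Matrix

theorem stmt_1 (n : ℕ) (H : Matrix (Fin n) (Fin n) ℝ) (hH : H.IsSymm)
    (g : Fin n → ℝ) (lam : ℝ)
    (hinv : IsUnit (H - lam • (1 : Matrix (Fin n) (Fin n) ℝ)))
    (γ : Fin n → ℝ) (hγ : γ ≠ 0)
    (hQEP : ((H - lam • (1 : Matrix (Fin n) (Fin n) ℝ)) ^ 2 - vecMulVec g g).mulVec γ = 0) :
    (H - lam • (1 : Matrix (Fin n) (Fin n) ℝ)).mulVec
        ((H - lam • (1 : Matrix (Fin n) (Fin n) ℝ))⁻¹.mulVec g) = g ∧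
    ((H - lam • (1 : Matrix (Fin n) (Fin n) ℝ))⁻¹.mulVec g) ⬝ᵥ
        ((H - lam • (1 : Matrix (Fin n) (Fin n) ℝ))⁻¹.mulVec g) = 1 := by
  set M := H - lam • (1 : Matrix (Fin n) (Fin n) ℝ) with hMdef
  have hMsymm : Mᵀ = M := by
    simp [hMdef, Matrix.transpose_sub, hH.eq, Matrix.transpose_smul]
  have hdet : IsUnit M.det := (Matrix.isUnit_iff_isUnit_det M).mp hinv
  have hMM : M * M⁻¹ = 1 := Matrix.mul_nonsing_inv M hdet
  have hMM' : M⁻¹ * M = 1 := Matrix.nonsing_inv_mul M hdet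
  have part1 : M.mulVec (M⁻¹.mulVec g) = g := by
    rw [Matrix.mulVec_mulVec, hMM, Matrix.one_mulVec]
  refine ⟨part1, ?_⟩
  set c := g ⬝ᵥ γ with hcdef
  have h2 : (vecMulVec g g).mulVec γ = c • g := by
    ext i
    simp only [Matrix.mulVec, Matrix.vecMulVec_apply, dotProduct, Pi.smul_apply,
      smul_eq_mul, hcdef]
    rw [Finset.sum_mul]
    apply Finset.sum_congr rfl
    intro j _
    ring
  have hQ : (M ^ 2).mulVec γ = c • g := by
    have h1 : (M ^ 2).mulVec γ - (vecMulVec g g).mulVec γ = 0 := by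
      rw [← Matrix.sub_mulVec]; exact hQEP
    rw [sub_eq_zero] at h1
    rw [h1, h2]
  have hkey : M⁻¹ * M⁻¹ * M ^ 2 = 1 := by
    rw [pow_two, Matrix.mul_assoc, ← Matrix.mul_assoc M⁻¹ M M, hMM', Matrix.one_mul, hMM']
  have hγeq : γ = c • ((M⁻¹ * M⁻¹).mulVec g) := by
    calc γ = (M⁻¹ * M⁻¹ * M ^ 2).mulVec γ := by rw [hkey, Matrix.one_mulVec]
    _ = (M⁻¹ * M⁻¹).mulVec ((M ^ 2).mulVec γ) := by rw [Matrix.mulVec_mulVec]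
    _ = (M⁻¹ * M⁻¹).mulVec (c • g) := by rw [hQ]
    _ = c • ((M⁻¹ * M⁻¹).mulVec g) := by rw [Matrix.mulVec_smul]
  have hc : c ≠ 0 := by
    intro h0
    apply hγ
    rw [hγeq, h0, zero_smul]
  have hdot : g ⬝ᵥ ((M⁻¹ * M⁻¹).mulVec g) = 1 := by
    have hcc : c = c * (g ⬝ᵥ ((M⁻¹ * M⁻¹).mulVec g)) := by
      conv_lhs => rw [hcdef, hγeq]
      rw [dotProduct_smul]
      simp [mul_comm]
    exact (mul_left_cancel₀ hc (by rw [mul_one]; exact hcc.symm))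
  have hinvsymm : M⁻¹ᵀ = M⁻¹ := by
    rw [Matrix.transpose_nonsing_inv, hMsymm]
  calc (M⁻¹.mulVec g) ⬝ᵥ (M⁻¹.mulVec g)
      = M⁻¹.vecMul (M⁻¹.mulVec g) ⬝ᵥ g := by rw [Matrix.dotProduct_mulVec]
    _ = (M⁻¹.mulVec (M⁻¹.mulVec g)) ⬝ᵥ g := by rw [← Matrix.mulVec_transpose, hinvsymm]
    _ = ((M⁻¹ * M⁻¹).mulVec g) ⬝ᵥ g := by rw [Matrix.mulVec_mulVec]
    _ = g ⬝ᵥ ((M⁻¹ * M⁻¹).mulVec g) := dotProduct_comm _ _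
    _ = 1 := hdot
end

section
/- Let H be a symmetric real n×n matrix, g ∈ ℝⁿ, λ ∈ ℝ, H − λI invertible, and γ ≠ 0 with ((H − λI)² − g gᵀ)γ = 0. Then gᵀγ ≠ 0, and after rescaling γ so that gᵀγ = 1, one has γ = (H − λI)⁻² g and gᵀ(H − λI)⁻² g = 1. -/
open Matrix

theorem stmt_2 (n : ℕ) (H : Matrix (Fin n) (Fin n) ℝ) (hH : H.IsSymm)
    (g : Fin n → ℝ) (lam : ℝ)
    (hinv : IsUnit (H - lam • (1 : Matrix (Fin n) (Fin n) ℝ)))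
    (γ : Fin n → ℝ) (hγ : γ ≠ 0)
    (hQEP : ((H - lam • (1 : Matrix (Fin n) (Fin n) ℝ)) ^ 2 - vecMulVec g g).mulVec γ = 0) :
    g ⬝ᵥ γ ≠ 0 ∧
    (g ⬝ᵥ γ)⁻¹ • γ = (((H - lam • (1 : Matrix (Fin n) (Fin n) ℝ))⁻¹) ^ 2).mulVec g ∧
    g ⬝ᵥ ((((H - lam • (1 : Matrix (Fin n) (Fin n) ℝ))⁻¹) ^ 2).mulVec g) = 1 := by
  set B := H - lam • (1 : Matrix (Fin n) (Fin n) ℝ) with hB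
  have hdet : IsUnit B.det := (Matrix.isUnit_iff_isUnit_det B).mp hinv
  have hBinv : B⁻¹ * B = 1 := Matrix.nonsing_inv_mul B hdet
  have hvv : (vecMulVec g g).mulVec γ = (g ⬝ᵥ γ) • g := by
    funext i
    simp [Matrix.mulVec, Matrix.vecMulVec_apply, dotProduct, Finset.mul_sum,
      mul_comm, mul_left_comm]
  have key : (B ^ 2).mulVec γ = (g ⬝ᵥ γ) • g := by
    have := hQEP
    rw [Matrix.sub_mulVec, sub_eq_zero] at this
    rw [this, hvv]
  have hcancel : ∀ v : Fin n → ℝ, ((B⁻¹) ^ 2).mulVec ((B ^ 2).mulVec v) = v := by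
    intro v
    rw [Matrix.mulVec_mulVec]
    have : (B⁻¹) ^ 2 * B ^ 2 = 1 := by
      rw [pow_two, pow_two, Matrix.mul_assoc, ← Matrix.mul_assoc B⁻¹ B B, hBinv,
        Matrix.one_mul, hBinv]
    rw [this, Matrix.one_mulVec]
  have hγeq : γ = (g ⬝ᵥ γ) • ((B⁻¹) ^ 2).mulVec g := by
    calc γ = ((B⁻¹) ^ 2).mulVec ((B ^ 2).mulVec γ) := (hcancel γ).symm
    _ = ((B⁻¹) ^ 2).mulVec ((g ⬝ᵥ γ) • g) := by rw [key]
    _ = (g ⬝ᵥ γ) • ((B⁻¹) ^ 2).mulVec g := by rw [Matrix.mulVec_smul]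
  have hne : g ⬝ᵥ γ ≠ 0 := by
    intro h0
    apply hγ
    rw [hγeq, h0, zero_smul]
  refine ⟨hne, ?_, ?_⟩
  · have h2 : (g ⬝ᵥ γ)⁻¹ • γ =
        (g ⬝ᵥ γ)⁻¹ • ((g ⬝ᵥ γ) • ((B⁻¹) ^ 2).mulVec g) := by rw [← hγeq]
    rw [h2, smul_smul, inv_mul_cancel₀ hne, one_smul]
  · have h1 := congrArg (fun v => g ⬝ᵥ v) hγeq
    simp only [dotProduct_smul, smul_eq_mul] at h1
    exact mul_left_cancel₀ hne (h1.symm.trans (mul_one _).symm).symm |>.symm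
end

section
/- Let H be a real n×n matrix, g ∈ ℝⁿ, and λ a scalar. Then λ is an eigenvalue of the 2n×2n block matrix M = [[H, −I], [−g gᵀ, H]] if and only if there exists γ ≠ 0 with (λ²I − 2λH + H² − g gᵀ)γ = 0; moreover, if (γ, μ) is an eigenvector of M for λ, then μ = (H − λI)γ. -/
open Matrix

private lemma blk_aux (n : ℕ) (H : Matrix (Fin n) (Fin n) ℝ) (g : Fin n → ℝ) (lam : ℝ)
    (γ μ : Fin n → ℝ) :
    (fromBlocks H (-1) (-(vecMulVec g g)) H).mulVec (Sum.elim γ μ) = lam • Sum.elim γ μ ↔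
      (H.mulVec γ - μ = lam • γ ∧
        -((vecMulVec g g).mulVec γ) + H.mulVec μ = lam • μ) := by
  rw [fromBlocks_mulVec, show lam • Sum.elim γ μ = Sum.elim (lam • γ) (lam • μ) from by
    ext x; cases x <;> simp]
  rw [Sum.elim_eq_iff]
  simp [neg_mulVec, sub_eq_add_neg]

private lemma quad_aux (n : ℕ) (H : Matrix (Fin n) (Fin n) ℝ) (g : Fin n → ℝ) (lam : ℝ)
    (γ : Fin n → ℝ) :
    (lam ^ 2 • (1 : Matrix (Fin n) (Fin n) ℝ) - (2 * lam) • H + H ^ 2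
        - vecMulVec g g).mulVec γ
      = (-((vecMulVec g g).mulVec γ) + H.mulVec (H.mulVec γ - lam • γ))
        - lam • (H.mulVec γ - lam • γ) := by
  simp only [sub_mulVec, add_mulVec, smul_mulVec, one_mulVec, pow_two,
    ← mulVec_mulVec, mulVec_sub, Matrix.mulVec_smul, smul_sub, smul_smul]
  module

theorem stmt_3 (n : ℕ) (H : Matrix (Fin n) (Fin n) ℝ) (g : Fin n → ℝ) (lam : ℝ) :
    ((∃ x : Fin n ⊕ Fin n → ℝ, x ≠ 0 ∧
        (fromBlocks H (-1) (-(vecMulVec g g)) H).mulVec x = lam • x) ↔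
      (∃ γ : Fin n → ℝ, γ ≠ 0 ∧
        (lam ^ 2 • (1 : Matrix (Fin n) (Fin n) ℝ) - (2 * lam) • H + H ^ 2
          - vecMulVec g g).mulVec γ = 0)) ∧
    (∀ γ μ : Fin n → ℝ, Sum.elim γ μ ≠ 0 →
      (fromBlocks H (-1) (-(vecMulVec g g)) H).mulVec (Sum.elim γ μ)
        = lam • Sum.elim γ μ →
      μ = (H - lam • (1 : Matrix (Fin n) (Fin n) ℝ)).mulVec γ) := by
  constructor
  · constructor
    · rintro ⟨x, hx, hMx⟩
      set γ := x ∘ Sum.inl with hγ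
      set μ := x ∘ Sum.inr with hμ
      have hx' : x = Sum.elim γ μ := by ext i; cases i <;> rfl
      rw [hx'] at hMx
      obtain ⟨h1, h2⟩ := (blk_aux n H g lam γ μ).mp hMx
      have hμγ : μ = H.mulVec γ - lam • γ := by
        rw [← h1]; ring_nf
      refine ⟨γ, ?_, ?_⟩
      · intro h0
        apply hx
        rw [hx', h0, hμγ, h0]
        ext i; cases i <;> simp
      · rw [quad_aux, ← hμγ, h2, sub_self]
    · rintro ⟨γ, hγ, hq⟩
      refine ⟨Sum.elim γ (H.mulVec γ - lam • γ), ?_, ?_⟩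
      · intro h0
        apply hγ
        ext i
        exact congrFun h0 (Sum.inl i)
      · rw [blk_aux]
        refine ⟨by ring_nf, ?_⟩
        rw [quad_aux] at hq
        linear_combination (norm := module) hq
  · intro γ μ _ hMx
    obtain ⟨h1, _⟩ := (blk_aux n H g lam γ μ).mp hMx
    rw [sub_mulVec, smul_mulVec, one_mulVec, ← h1]
    ring_nf
end

section
/- Let A be a real m×n matrix with n ≥ 1 and b ∈ ℝᵐ. Then there exist λ ∈ ℝ and u ∈ ℝⁿ with ‖u‖ = 1 such that AᵀA u − λ u = Aᵀ b and ‖Au − b‖ ≤ ‖Av − b‖ for every v with ‖v‖ = 1. -/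
open Matrix
open scoped RealInnerProductSpace

/-- The Euclidean norm of a vector in `ℝⁿ`. -/
noncomputable def euclNorm {k : ℕ} (x : Fin k → ℝ) : ℝ :=
  ‖(WithLp.equiv 2 (Fin k → ℝ)).symm x‖

theorem stmt_5 (m n : ℕ) (hn : 1 ≤ n) (A : Matrix (Fin m) (Fin n) ℝ)
    (b : Fin m → ℝ) :
    ∃ (lam : ℝ) (u : Fin n → ℝ), euclNorm u = 1 ∧
      (Aᵀ * A).mulVec u - lam • u = Aᵀ.mulVec b ∧
      ∀ v : Fin n → ℝ, euclNorm v = 1 →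
        euclNorm (A.mulVec u - b) ≤ euclNorm (A.mulVec v - b) := by
  classical
  let E := EuclideanSpace ℝ (Fin n)
  let F := EuclideanSpace ℝ (Fin m)
  let L : E →L[ℝ] F := LinearMap.toContinuousLinearMap (Matrix.toEuclideanLin A)
  let b' : F := (WithLp.equiv 2 (Fin m → ℝ)).symm b
  let φ : E → ℝ := fun x => ‖L x - b'‖ ^ 2
  have hE : Nontrivial E := by
    have : Nonempty (Fin n) := ⟨⟨0, hn⟩⟩
    infer_instance
  have hne : (Metric.sphere (0 : E) 1).Nonempty :=
    NormedSpace.sphere_nonempty.2 zero_le_one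
  have hφc : ContinuousOn φ (Metric.sphere (0 : E) 1) :=
    (((L.continuous.sub continuous_const).norm.pow 2)).continuousOn
  obtain ⟨u, hu, hmin⟩ := (isCompact_sphere (0 : E) 1).exists_isMinOn hne hφc
  have hu1 : ‖u‖ = 1 := by simpa using hu
  -- Lagrange multipliers
  have hextr : IsLocalExtrOn φ {x : E | ‖x‖ ^ 2 = ‖u‖ ^ 2} u := by
    have hset : {x : E | ‖x‖ ^ 2 = ‖u‖ ^ 2} = Metric.sphere (0 : E) 1 := by
      ext x
      simp only [Set.mem_setOf_eq, mem_sphere_iff_norm, sub_zero, hu1, one_pow]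
      constructor
      · intro h; have : ‖x‖ = 1 := by nlinarith [norm_nonneg x]
        simpa using this
      · intro h; have h' : ‖x‖ = 1 := by simpa using h
        rw [h']; norm_num
    rw [hset]
    exact Or.inl (hmin.filter_mono inf_le_right)
  have hf' : HasStrictFDerivAt (fun x : E => ‖x‖ ^ 2) (2 • (innerSL ℝ u)) u :=
    hasStrictFDerivAt_norm_sq u
  have hφ' : HasStrictFDerivAt φ ((2 • (innerSL ℝ (L u - b'))).comp L) u := by
    have h1 : HasStrictFDerivAt (fun x : E => L x - b') L u :=
      (L.hasStrictFDerivAt).sub_const b'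
    exact (hasStrictFDerivAt_norm_sq (L u - b')).comp u h1
  obtain ⟨a, c, habc, heq⟩ := hextr.exists_multipliers_of_hasStrictFDerivAt_1d hf' hφ'
  -- from heq : a • (2 • innerSL u) + c • ((2 • innerSL (L u - b')).comp L) = 0
  have hkey : ∀ w : E, a * (inner ℝ u w) + c * (inner ℝ (L u - b') (L w)) = 0 := by
    intro w
    have := congrFun (congrArg DFunLike.coe heq) w
    simp only [ContinuousLinearMap.add_apply, ContinuousLinearMap.smul_apply,
      ContinuousLinearMap.comp_apply, ContinuousLinearMap.zero_apply, innerSL_apply_apply,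
      smul_eq_mul] at this
    simp only [nsmul_eq_mul] at this
    linear_combination this / 2
  -- rewrite via adjoint
  let w0 : E := Matrix.toEuclideanLin Aᵀ (L u - b')
  have hadj : ∀ w : E, (inner ℝ (L u - b') (L w)) = (inner ℝ w0 w) := by
    intro w
    have hAT : Aᴴ = Aᵀ := by
      ext i j; simp [Matrix.conjTranspose_apply]
    have := Matrix.toEuclideanLin_conjTranspose_eq_adjoint A
    rw [hAT] at this
    show (inner ℝ (L u - b') (L w)) = (inner ℝ ((Matrix.toEuclideanLin Aᵀ) (L u - b')) w)
    rw [this, LinearMap.adjoint_inner_left]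
    rfl
  have hvec : a • u + c • w0 = 0 := by
    apply ext_inner_right ℝ
    intro w
    simp only [inner_add_left, real_inner_smul_left, inner_zero_left]
    rw [← hadj w]
    exact hkey w
  have hc : c ≠ 0 := by
    intro hc0
    have ha : a ≠ 0 := by
      intro ha0; exact habc (by simp [ha0, hc0, Prod.ext_iff])
    have : a • u = 0 := by simpa [hc0] using hvec
    have : u = 0 := by
      rcases smul_eq_zero.1 this with h | h
      · exact absurd h ha
      · exact h
    rw [this] at hu1; simp at hu1
  refine ⟨-a / c, u, ?_, ?_, ?_⟩
  · simpa [euclNorm] using hu1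
  · -- (Aᵀ * A).mulVec u - lam • u = Aᵀ.mulVec b
    have h2 : c • w0 = (-a) • u := by
      rw [neg_smul]
      rw [add_comm] at hvec
      exact eq_neg_of_add_eq_zero_left hvec
    have hw0 : w0 = (-a / c) • u := by
      have := congrArg (fun x : E => c⁻¹ • x) h2
      simpa [smul_smul, inv_mul_cancel₀ hc, div_eq_inv_mul, mul_comm] using this
    have hw0' : (WithLp.equiv 2 (Fin n → ℝ)) w0
        = Aᵀ.mulVec (A.mulVec ((WithLp.equiv 2 (Fin n → ℝ)) u) - b) := by
      show (WithLp.equiv 2 (Fin n → ℝ))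
        (Matrix.toEuclideanLin Aᵀ (Matrix.toEuclideanLin A u - b')) = _
      rw [Matrix.toEuclideanLin_apply, Matrix.toEuclideanLin_apply]
      rfl
    have hkey2 : Aᵀ.mulVec (A.mulVec ((WithLp.equiv 2 (Fin n → ℝ)) u) - b)
        = (-a / c) • ((WithLp.equiv 2 (Fin n → ℝ)) u) := by
      rw [← hw0', hw0]
      rfl
    have hexp : Aᵀ.mulVec (A.mulVec ((WithLp.equiv 2 (Fin n → ℝ)) u) - b)
        = (Aᵀ * A).mulVec ((WithLp.equiv 2 (Fin n → ℝ)) u) - Aᵀ.mulVec b := by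
      rw [Matrix.mulVec_sub, ← Matrix.mulVec_mulVec]
    rw [hexp] at hkey2
    have h3 := sub_eq_iff_eq_add.1 hkey2
    show (Aᵀ * A).mulVec ((WithLp.equiv 2 (Fin n → ℝ)) u)
        - (-a / c) • ((WithLp.equiv 2 (Fin n → ℝ)) u) = Aᵀ.mulVec b
    funext i
    have h := congrFun h3 i
    simp only [Pi.add_apply, Pi.smul_apply, Pi.sub_apply, smul_eq_mul] at h ⊢
    linarith
  · intro v hv
    have hv1 : ‖(WithLp.equiv 2 (Fin n → ℝ)).symm v‖ = 1 := hv
    have := hmin (by simpa using hv1 : (WithLp.equiv 2 (Fin n → ℝ)).symm v ∈ Metric.sphere (0:E) 1)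
    -- this : φ u ≤ φ v'
    have hφv : φ ((WithLp.equiv 2 (Fin n → ℝ)).symm v) = euclNorm (A.mulVec v - b) ^ 2 := rfl
    have hle : euclNorm (A.mulVec u - b) ^ 2 ≤ euclNorm (A.mulVec v - b) ^ 2 := by
      rw [← hφv]; exact this
    have h1 : (0:ℝ) ≤ euclNorm (A.mulVec u - b) := norm_nonneg _
    have h2 : (0:ℝ) ≤ euclNorm (A.mulVec v - b) := norm_nonneg _
    nlinarith [hle, h1, h2]
end

section
/- Let A be a real m×n matrix with n ≥ 1 and b ∈ ℝᵐ, and set H = AᵀA, g = Aᵀb. Then the quadratic eigenvalue problem arising from the KKT conditions has a real solution: there exists λ ∈ ℝ with det(λ²I − 2λH + H² − g gᵀ) = 0. -/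
open Matrix Polynomial

section aux

variable {n : ℕ}

/-- evaluation of the characteristic polynomial -/
lemma aux_eval_charpoly (M : Matrix (Fin n) (Fin n) ℝ) (t : ℝ) :
    eval t (Matrix.charpoly M) = (t • (1 : Matrix (Fin n) (Fin n) ℝ) - M).det := by
  have hmap : (charmatrix M).map (eval t) = t • (1 : Matrix (Fin n) (Fin n) ℝ) - M := by
    ext i j
    by_cases h : i = j
    · subst h
      simp [charmatrix_apply_eq, Matrix.smul_apply, Matrix.one_apply_eq]
    · simp [charmatrix_apply_ne _ _ _ h, Matrix.smul_apply, Matrix.one_apply_ne h]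
  calc eval t (charmatrix M).det = (evalRingHom t) (charmatrix M).det := rfl
    _ = ((charmatrix M).map (evalRingHom t)).det := RingHom.map_det (evalRingHom t) _
    _ = (t • (1 : Matrix (Fin n) (Fin n) ℝ) - M).det := by
        rw [show (charmatrix M).map (evalRingHom t) = (charmatrix M).map (eval t) from rfl, hmap]

/-- matrix determinant lemma, invertible case -/
lemma aux_det_inv (S : Matrix (Fin n) (Fin n) ℝ) (g : Fin n → ℝ)
    (hS : S.det ≠ 0) :
    (S * S - vecMulVec g g).det
      = (S * S).det - (g ᵥ* adjugate (S * S)) ⬝ᵥ g := by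
  set M := S * S with hM
  have hMdet : M.det ≠ 0 := by
    rw [hM, det_mul]; exact mul_ne_zero hS hS
  have hMunit : IsUnit M.det := isUnit_iff_ne_zero.mpr hMdet
  have h1 : M - vecMulVec g g = M + replicateCol Unit (-g) * replicateRow Unit g := by
    ext i j
    simp [Matrix.mul_apply, vecMulVec_apply, sub_eq_add_neg]
  have h2 : ((1 + replicateRow Unit g * M⁻¹ * replicateCol Unit (-g)) : Matrix Unit Unit ℝ).det
      = 1 - (g ᵥ* M⁻¹) ⬝ᵥ g := by
    rw [Matrix.det_unique, Matrix.add_apply, Matrix.one_apply_eq, ← Matrix.replicateRow_vecMul,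
      Matrix.replicateRow_mul_replicateCol_apply, dotProduct_neg, ← sub_eq_add_neg]
  rw [h1, Matrix.det_add_mul _ _ hMunit, h2, mul_sub, mul_one]
  congr 1
  have hadj : adjugate M = M.det • M⁻¹ := by
    rw [Matrix.inv_def, smul_smul, Ring.mul_inverse_cancel _ hMunit, one_smul]
  rw [hadj]
  have hsm : g ᵥ* (M.det • M⁻¹) = M.det • (g ᵥ* M⁻¹) := by
    ext j
    simp only [Matrix.vecMul, dotProduct, Matrix.smul_apply, Pi.smul_apply,
      smul_eq_mul, Finset.mul_sum]
    exact Finset.sum_congr rfl fun i _ => by ring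
  rw [hsm, smul_dotProduct, smul_eq_mul]

/-- matrix determinant lemma specialized, general case by density -/
lemma aux_det_gen (S : Matrix (Fin n) (Fin n) ℝ) (g : Fin n → ℝ) :
    (S * S - vecMulVec g g).det
      = (S * S).det - (g ᵥ* adjugate (S * S)) ⬝ᵥ g := by
  set B : ℝ → Matrix (Fin n) (Fin n) ℝ := fun t => S + t • 1 with hB
  have hBdet : ∀ t : ℝ, (B t).det = eval t (Matrix.charpoly (-S)) := by
    intro t
    rw [aux_eval_charpoly, sub_neg_eq_add, add_comm]
  have hfin : Set.Finite {t : ℝ | (B t).det = 0} := by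
    apply Set.Finite.subset (Polynomial.finite_setOf_isRoot
      (Matrix.charpoly_monic (-S)).ne_zero)
    intro t ht
    simp only [Set.mem_setOf_eq] at *
    rw [IsRoot.def, ← hBdet t]
    exact ht
  have hdense : Dense {t : ℝ | (B t).det = 0}ᶜ := hfin.countable.dense_compl ℝ
  have hcontB : Continuous B := continuous_const.add (continuous_id.smul continuous_const)
  have hcontBB : Continuous fun t => B t * B t := hcontB.matrix_mul hcontB
  have hc1 : Continuous fun t => ((B t) * (B t) - vecMulVec g g).det :=
    (hcontBB.sub continuous_const).matrix_det
  have hc2 : Continuous fun t =>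
      ((B t) * (B t)).det - (g ᵥ* adjugate ((B t) * (B t))) ⬝ᵥ g :=
    (hcontBB.matrix_det).sub
      ((Continuous.matrix_vecMul continuous_const hcontBB.matrix_adjugate).dotProduct
        continuous_const)
  have heq : ∀ t ∈ {t : ℝ | (B t).det = 0}ᶜ,
      ((B t) * (B t) - vecMulVec g g).det
        = ((B t) * (B t)).det - (g ᵥ* adjugate ((B t) * (B t))) ⬝ᵥ g := by
    intro t ht
    exact aux_det_inv (B t) g ht
  have hfuneq := Continuous.ext_on hdense hc1 hc2 heq
  have h0 := congrFun hfuneq 0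
  simpa [hB] using h0

/-- key sign fact: if `S` is symmetric singular then `det (S² - g gᵀ) ≤ 0` -/
lemma aux_det_nonpos (S : Matrix (Fin n) (Fin n) ℝ) (g : Fin n → ℝ)
    (hsymm : Sᵀ = S) (hdet : S.det = 0) :
    (S * S - vecMulVec g g).det ≤ 0 := by
  rw [aux_det_gen, det_mul, hdet, zero_mul, zero_sub, neg_nonpos]
  rw [adjugate_mul_distrib]
  set u := g ᵥ* adjugate S with hu
  have hadj : (adjugate S)ᵀ = adjugate S := by
    rw [adjugate_transpose, hsymm]
  have h1 : g ᵥ* (adjugate S * adjugate S) = u ᵥ* adjugate S := (vecMul_vecMul g _ _).symm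
  rw [h1, ← dotProduct_mulVec]
  have h2 : adjugate S *ᵥ g = u := by
    rw [← hadj, mulVec_transpose, hu]
  rw [h2]
  exact Finset.sum_nonneg fun i _ => mul_self_nonneg (u i)

end aux

theorem stmt_6 (m n : ℕ) (hn : 1 ≤ n) (A : Matrix (Fin m) (Fin n) ℝ)
    (b : Fin m → ℝ) :
    ∃ lam : ℝ,
      (lam ^ 2 • (1 : Matrix (Fin n) (Fin n) ℝ) - (2 * lam) • (Aᵀ * A)
        + (Aᵀ * A) ^ 2 - vecMulVec (Aᵀ.mulVec b) (Aᵀ.mulVec b)).det = 0 := by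
  set H : Matrix (Fin n) (Fin n) ℝ := Aᵀ * A with hHdef
  set g : Fin n → ℝ := Aᵀ.mulVec b with hgdef
  have hHsymm : Hᵀ = H := by
    rw [hHdef, transpose_mul, transpose_transpose]
  -- the quadratic matrix polynomial factors as (lam • 1 - H)² - g gᵀ
  have hexp : ∀ lam : ℝ,
      lam ^ 2 • (1 : Matrix (Fin n) (Fin n) ℝ) - (2 * lam) • H + H ^ 2 - vecMulVec g g
        = (lam • 1 - H) * (lam • 1 - H) - vecMulVec g g := by
    intro lam
    congr 1
    have hfac : (lam • (1 : Matrix (Fin n) (Fin n) ℝ) - H) * (lam • 1 - H)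
        = (lam * lam) • (1 : Matrix (Fin n) (Fin n) ℝ) - lam • H - lam • H + H * H := by
      simp only [sub_mul, mul_sub, smul_mul_assoc, mul_smul_comm, one_mul, mul_one, smul_smul]
      module
    rw [hfac, pow_two H]
    module
  set p : ℝ → ℝ := fun lam =>
    (lam ^ 2 • (1 : Matrix (Fin n) (Fin n) ℝ) - (2 * lam) • H + H ^ 2 - vecMulVec g g).det
    with hp
  have hpcont : Continuous p := by
    apply Continuous.matrix_det
    exact (((continuous_pow 2).smul continuous_const).sub
      ((continuous_const.mul continuous_id).smul continuous_const)).add continuous_const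
      |>.sub continuous_const
  -- eigenvalue of H
  have hH : H.IsHermitian := by
    have := isHermitian_conjTranspose_mul_self A
    rwa [conjTranspose_eq_transpose_of_trivial] at this
  set i0 : Fin n := ⟨0, hn⟩
  set μ : ℝ := hH.eigenvalues i0 with hμ
  set w : Fin n → ℝ := ⇑(hH.eigenvectorBasis i0) with hw
  have hw0 : w ≠ 0 := by
    intro h
    have := hH.eigenvectorBasis.orthonormal.ne_zero i0
    apply this
    ext j
    exact congrFun h j
  have hS : (μ • (1 : Matrix (Fin n) (Fin n) ℝ) - H).det = 0 := by
    rw [← Matrix.exists_mulVec_eq_zero_iff]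
    refine ⟨w, hw0, ?_⟩
    rw [sub_mulVec, smul_mulVec, one_mulVec, hw, hH.mulVec_eigenvectorBasis, hμ, sub_self]
  have hSsymm : (μ • (1 : Matrix (Fin n) (Fin n) ℝ) - H)ᵀ = μ • 1 - H := by
    rw [transpose_sub, transpose_smul, transpose_one, hHsymm]
  have hpμ : p μ ≤ 0 := by
    rw [hp]
    simp only
    rw [hexp μ]
    exact aux_det_nonpos _ g hSsymm hS
  -- large lam gives positive determinant
  set F : ℝ := ∑ i, ∑ j, (A i j) ^ 2 with hF
  set G : ℝ := g ⬝ᵥ g with hG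
  have hF0 : 0 ≤ F := Finset.sum_nonneg fun i _ => Finset.sum_nonneg fun j _ => sq_nonneg _
  have hG0 : 0 ≤ G := Finset.sum_nonneg fun i _ => mul_self_nonneg _
  set Λ : ℝ := max (2 * F + G + 1) (μ + 1) with hΛdef
  have hΛ1 : 2 * F + G + 1 ≤ Λ := le_max_left _ _
  have hΛ2 : μ + 1 ≤ Λ := le_max_right _ _
  have hposdef : ((Λ • (1 : Matrix (Fin n) (Fin n) ℝ) - H) * (Λ • 1 - H)
      - vecMulVec g g).PosDef := by
    set S : Matrix (Fin n) (Fin n) ℝ := Λ • 1 - H with hSdef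
    have hSsym : Sᵀ = S := by rw [hSdef, transpose_sub, transpose_smul, transpose_one, hHsymm]
    refine Matrix.PosDef.of_dotProduct_mulVec_pos ?_ ?_
    · show (S * S - vecMulVec g g)ᴴ = _
      rw [conjTranspose_eq_transpose_of_trivial, transpose_sub, transpose_mul, hSsym]
      congr 1
      ext i j
      simp [vecMulVec_apply, mul_comm]
    · intro x hx
      have hstar : star x = x := by
        ext i; simp
      rw [hstar]
      have hXpos : 0 < x ⬝ᵥ x := by
        rcases lt_or_eq_of_le (Finset.sum_nonneg fun i _ => mul_self_nonneg (x i)) with h | h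
        · exact h
        · exact absurd (dotProduct_self_eq_zero.mp h.symm) hx
      -- quadratic form value
      have hmv : (S * S - vecMulVec g g) *ᵥ x
          = S *ᵥ (S *ᵥ x) - (g ⬝ᵥ x) • g := by
        rw [sub_mulVec, mulVec_mulVec]
        congr 1
        ext i
        simp only [Matrix.mulVec, dotProduct, vecMulVec_apply, Pi.smul_apply, smul_eq_mul]
        rw [Finset.sum_mul]
        exact Finset.sum_congr rfl fun j _ => by ring
      rw [hmv, dotProduct_sub, dotProduct_smul]
      have hsym_dot : x ⬝ᵥ (S *ᵥ (S *ᵥ x)) = (S *ᵥ x) ⬝ᵥ (S *ᵥ x) := by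
        rw [dotProduct_mulVec x S, ← mulVec_transpose, hSsym]
      rw [hsym_dot]
      have hSx : S *ᵥ x = Λ • x - H *ᵥ x := by
        rw [hSdef, sub_mulVec, smul_mulVec, one_mulVec]
      set c : ℝ := x ⬝ᵥ (H *ᵥ x) with hc
      set d : ℝ := (H *ᵥ x) ⬝ᵥ (H *ᵥ x) with hd
      set X : ℝ := x ⬝ᵥ x with hX
      have hexpand : (S *ᵥ x) ⬝ᵥ (S *ᵥ x) = Λ ^ 2 * X - 2 * Λ * c + d := by
        rw [hSx]
        simp only [dotProduct_sub, sub_dotProduct, smul_dotProduct, dotProduct_smul,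
          smul_eq_mul]
        rw [dotProduct_comm (H *ᵥ x) x, ← hc, ← hd, ← hX]
        ring
      rw [hexpand]
      have hd0 : 0 ≤ d := Finset.sum_nonneg fun i _ => mul_self_nonneg _
      -- c ≤ F * X
      have hcF : c ≤ F * X := by
        have h1 : c = (A *ᵥ x) ⬝ᵥ (A *ᵥ x) := by
          rw [hc, hHdef, ← mulVec_mulVec, dotProduct_mulVec, vecMul_transpose]
        rw [h1, hF]
        have h2 : ∀ i, (A *ᵥ x) i * (A *ᵥ x) i ≤ (∑ j, (A i j) ^ 2) * X := by
          intro i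
          have := Finset.sum_mul_sq_le_sq_mul_sq Finset.univ (fun j => A i j) x
          calc (A *ᵥ x) i * (A *ᵥ x) i = (∑ j, A i j * x j) ^ 2 := by
                simp [Matrix.mulVec, dotProduct, pow_two]
            _ ≤ (∑ j, (A i j) ^ 2) * ∑ j, (x j) ^ 2 := this
            _ = (∑ j, (A i j) ^ 2) * X := by
                congr 1
                simp [hX, dotProduct, pow_two]
        calc (A *ᵥ x) ⬝ᵥ (A *ᵥ x) = ∑ i, (A *ᵥ x) i * (A *ᵥ x) i := rfl
          _ ≤ ∑ i, (∑ j, (A i j) ^ 2) * X := Finset.sum_le_sum fun i _ => h2 i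
          _ = (∑ i, ∑ j, (A i j) ^ 2) * X := by rw [Finset.sum_mul]
      -- (g ⬝ᵥ x)^2 ≤ G * X
      have hgx : (g ⬝ᵥ x) * (x ⬝ᵥ g) ≤ G * X := by
        have h3 : (g ⬝ᵥ x) * (x ⬝ᵥ g) = (∑ i, g i * x i) ^ 2 := by
          rw [dotProduct_comm x g, pow_two]; rfl
        have h4 := Finset.sum_mul_sq_le_sq_mul_sq Finset.univ g x
        rw [h3, hG, hX]
        calc (∑ i, g i * x i) ^ 2 ≤ (∑ i, (g i) ^ 2) * ∑ i, (x i) ^ 2 := h4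
          _ = (g ⬝ᵥ g) * (x ⬝ᵥ x) := by
              congr 1 <;> simp [dotProduct, pow_two]
      have hquad : 0 < Λ ^ 2 - 2 * Λ * F - G := by nlinarith
      simp only [smul_eq_mul]
      nlinarith [mul_pos hXpos hquad, mul_le_mul_of_nonneg_left hcF
        (by nlinarith : (0:ℝ) ≤ 2 * Λ)]
  have hpΛ : 0 < p Λ := by
    rw [hp]
    simp only
    rw [hexp Λ]
    exact hposdef.det_pos
  -- intermediate value theorem
  have hμΛ : μ ≤ Λ := by linarith
  have := intermediate_value_Icc hμΛ hpcont.continuousOn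
  obtain ⟨lam, _, hlam⟩ := this ⟨hpμ, hpΛ.le⟩
  exact ⟨lam, hlam⟩
end

section
/- Let A be a real m×n matrix, b ∈ ℝᵐ, and suppose λ ∈ ℝ and u ∈ ℝⁿ satisfy (AᵀA − λI)u = Aᵀb and uᵀu = 1. Then for every v ∈ ℝⁿ with vᵀv = 1, ‖Av − b‖² − ‖Au − b‖² = (v − u)ᵀ(AᵀA − λI)(v − u). -/
open Matrix

lemma euclNorm_sq {k : ℕ} (x : Fin k → ℝ) : euclNorm x ^ 2 = x ⬝ᵥ x := by
  rw [euclNorm, EuclideanSpace.norm_eq, Real.sq_sqrt (by positivity)]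
  simp [dotProduct, sq]

theorem stmt_9 (m n : ℕ) (A : Matrix (Fin m) (Fin n) ℝ) (b : Fin m → ℝ)
    (lam : ℝ) (u : Fin n → ℝ)
    (hKKT : (Aᵀ * A - lam • (1 : Matrix (Fin n) (Fin n) ℝ)).mulVec u = Aᵀ.mulVec b)
    (hu : u ⬝ᵥ u = 1) :
    ∀ v : Fin n → ℝ, v ⬝ᵥ v = 1 →
      euclNorm (A.mulVec v - b) ^ 2 - euclNorm (A.mulVec u - b) ^ 2
        = (v - u) ⬝ᵥ (Aᵀ * A - lam • (1 : Matrix (Fin n) (Fin n) ℝ)).mulVec (v - u) := by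
  intro v hv
  set M : Matrix (Fin n) (Fin n) ℝ := Aᵀ * A - lam • (1 : Matrix (Fin n) (Fin n) ℝ) with hMdef
  have hM : ∀ x y : Fin n → ℝ,
      x ⬝ᵥ M.mulVec y = A.mulVec x ⬝ᵥ A.mulVec y - lam * (x ⬝ᵥ y) := by
    intro x y
    rw [hMdef, Matrix.sub_mulVec, dotProduct_sub, Matrix.smul_mulVec,
      Matrix.one_mulVec, dotProduct_smul, ← Matrix.mulVec_mulVec,
      Matrix.dotProduct_mulVec, Matrix.vecMul_transpose]
    simp [smul_eq_mul]
  have hKu : ∀ x : Fin n → ℝ, x ⬝ᵥ M.mulVec u = A.mulVec x ⬝ᵥ b := by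
    intro x
    rw [hKKT, Matrix.dotProduct_mulVec, Matrix.vecMul_transpose]
  have huMv : u ⬝ᵥ M.mulVec v = v ⬝ᵥ M.mulVec u := by
    rw [hM, hM, dotProduct_comm (A.mulVec u), dotProduct_comm u]
  have huMu : u ⬝ᵥ M.mulVec u = A.mulVec u ⬝ᵥ b := hKu u
  have hvMu : v ⬝ᵥ M.mulVec v = A.mulVec v ⬝ᵥ A.mulVec v - lam := by
    rw [hM, hv]; ring
  have huu : u ⬝ᵥ M.mulVec u = A.mulVec u ⬝ᵥ A.mulVec u - lam := by
    rw [hM, hu]; ring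
  have hexp : (v - u) ⬝ᵥ M.mulVec (v - u)
      = v ⬝ᵥ M.mulVec v - v ⬝ᵥ M.mulVec u - u ⬝ᵥ M.mulVec v + u ⬝ᵥ M.mulVec u := by
    simp only [Matrix.mulVec_sub, sub_dotProduct, dotProduct_sub]
    ring
  rw [euclNorm_sq, euclNorm_sq, hexp, huMv, hKu v, huMu, hvMu]
  have h1 : (A.mulVec v - b) ⬝ᵥ (A.mulVec v - b)
      = A.mulVec v ⬝ᵥ A.mulVec v - 2 * (A.mulVec v ⬝ᵥ b) + b ⬝ᵥ b := by
    rw [dotProduct_sub, sub_dotProduct, sub_dotProduct, dotProduct_comm b (A.mulVec v)]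
    ring
  have h2 : (A.mulVec u - b) ⬝ᵥ (A.mulVec u - b)
      = A.mulVec u ⬝ᵥ A.mulVec u - 2 * (A.mulVec u ⬝ᵥ b) + b ⬝ᵥ b := by
    rw [dotProduct_sub, sub_dotProduct, sub_dotProduct, dotProduct_comm b (A.mulVec u)]
    ring
  have h3 : A.mulVec u ⬝ᵥ A.mulVec u - lam = A.mulVec u ⬝ᵥ b := by
    rw [← huu, huMu]
  rw [h1, h2]
  nlinarith [h3]
end

section
/- Let A be a real m×n matrix, b ∈ ℝᵐ, and suppose λ ∈ ℝ and u ∈ ℝⁿ satisfy the KKT conditions (AᵀA − λI)u = Aᵀb and uᵀu = 1. If the matrix AᵀA − λI is positive semidefinite, then u is a global minimizer of the constrained least squares problem: ‖Au − b‖ ≤ ‖Av − b‖ for all v with ‖v‖ = 1. -/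
open Matrix

lemma euclNorm_eq_sqrt {k : ℕ} (x : Fin k → ℝ) :
    euclNorm x = Real.sqrt (x ⬝ᵥ x) := by
  rw [euclNorm, EuclideanSpace.norm_eq]
  congr 1
  simp [dotProduct, sq_abs, sq]

theorem stmt_10 (m n : ℕ) (A : Matrix (Fin m) (Fin n) ℝ) (b : Fin m → ℝ)
    (lam : ℝ) (u : Fin n → ℝ)
    (hKKT : (Aᵀ * A - lam • (1 : Matrix (Fin n) (Fin n) ℝ)).mulVec u = Aᵀ.mulVec b)
    (hu : u ⬝ᵥ u = 1)
    (hpsd : ∀ x : Fin n → ℝ,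
      0 ≤ x ⬝ᵥ (Aᵀ * A - lam • (1 : Matrix (Fin n) (Fin n) ℝ)).mulVec x) :
    ∀ v : Fin n → ℝ, euclNorm v = 1 →
      euclNorm (A.mulVec u - b) ≤ euclNorm (A.mulVec v - b) := by
  intro v hv
  set M : Matrix (Fin n) (Fin n) ℝ := Aᵀ * A - lam • (1 : Matrix (Fin n) (Fin n) ℝ) with hM
  have hvv : v ⬝ᵥ v = 1 := by
    rw [euclNorm_eq_sqrt] at hv
    have hnn : 0 ≤ v ⬝ᵥ v := Finset.sum_nonneg fun i _ => mul_self_nonneg _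
    have := Real.sq_sqrt hnn
    rw [hv] at this; linarith [this]
  -- key scalar facts
  have hMsymm : Mᵀ = M := by
    simp [hM, Matrix.transpose_sub, Matrix.transpose_mul, Matrix.transpose_smul]
  have hsym : ∀ x y : Fin n → ℝ, x ⬝ᵥ M.mulVec y = y ⬝ᵥ M.mulVec x := by
    intro x y
    rw [Matrix.dotProduct_mulVec, ← Matrix.mulVec_transpose, hMsymm, dotProduct_comm]
  have hAx : ∀ x y : Fin n → ℝ, (A.mulVec x) ⬝ᵥ (A.mulVec y) = x ⬝ᵥ (Aᵀ * A).mulVec y := by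
    intro x y
    rw [Matrix.dotProduct_mulVec, Matrix.dotProduct_mulVec, ← Matrix.vecMul_vecMul,
      Matrix.vecMul_transpose]
  have hquad : ∀ x : Fin n → ℝ,
      x ⬝ᵥ (Aᵀ * A).mulVec x = x ⬝ᵥ M.mulVec x + lam * (x ⬝ᵥ x) := by
    intro x
    simp [hM, Matrix.sub_mulVec, dotProduct_sub, Matrix.smul_mulVec,
      Matrix.one_mulVec, dotProduct_smul, smul_eq_mul]
  have hAb : ∀ x : Fin n → ℝ, b ⬝ᵥ A.mulVec x = x ⬝ᵥ M.mulVec u := by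
    intro x
    rw [hKKT, Matrix.dotProduct_mulVec, Matrix.mulVec_transpose, dotProduct_comm]
  have key : (A.mulVec u - b) ⬝ᵥ (A.mulVec u - b) ≤ (A.mulVec v - b) ⬝ᵥ (A.mulVec v - b) := by
    have hpsd' := hpsd (v - u)
    have hexp : (v - u) ⬝ᵥ M.mulVec (v - u)
        = v ⬝ᵥ M.mulVec v - 2 * (u ⬝ᵥ M.mulVec v) + u ⬝ᵥ M.mulVec u := by
      rw [Matrix.mulVec_sub, dotProduct_sub, sub_dotProduct,
        sub_dotProduct, hsym v u]
      ring
    have e1 : (A.mulVec u - b) ⬝ᵥ (A.mulVec u - b)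
        = u ⬝ᵥ M.mulVec u + lam - 2 * (u ⬝ᵥ M.mulVec u) + b ⬝ᵥ b := by
      rw [dotProduct_sub, sub_dotProduct, sub_dotProduct,
        hAx, hquad, hu, dotProduct_comm (A.mulVec u) b, hAb]
      ring
    have e2 : (A.mulVec v - b) ⬝ᵥ (A.mulVec v - b)
        = v ⬝ᵥ M.mulVec v + lam - 2 * (v ⬝ᵥ M.mulVec u) + b ⬝ᵥ b := by
      rw [dotProduct_sub, sub_dotProduct, sub_dotProduct,
        hAx, hquad, hvv, dotProduct_comm (A.mulVec v) b, hAb]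
      ring
    rw [e1, e2]
    have := hsym u v
    nlinarith [hpsd', hexp]
  rw [euclNorm_eq_sqrt, euclNorm_eq_sqrt]
  exact Real.sqrt_le_sqrt key
end

section
/- Let A be a real m×n matrix, b ∈ ℝᵐ, and suppose λ ∈ ℝ and u ∈ ℝⁿ satisfy the KKT conditions (AᵀA − λI)u = Aᵀb and uᵀu = 1. If AᵀA − λI is positive definite, then u is the unique global minimizer of ‖Av − b‖² over the unit sphere: for every v with ‖v‖ = 1 and v ≠ u, ‖Av − b‖² > ‖Au − b‖². -/
open Matrix

theorem stmt_11 (m n : ℕ) (A : Matrix (Fin m) (Fin n) ℝ) (b : Fin m → ℝ)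
    (lam : ℝ) (u : Fin n → ℝ)
    (hKKT : (Aᵀ * A - lam • (1 : Matrix (Fin n) (Fin n) ℝ)).mulVec u = Aᵀ.mulVec b)
    (hu : u ⬝ᵥ u = 1)
    (hpd : ∀ x : Fin n → ℝ, x ≠ 0 →
      0 < x ⬝ᵥ (Aᵀ * A - lam • (1 : Matrix (Fin n) (Fin n) ℝ)).mulVec x) :
    ∀ v : Fin n → ℝ, euclNorm v = 1 → v ≠ u →
      euclNorm (A.mulVec u - b) ^ 2 < euclNorm (A.mulVec v - b) ^ 2 := by
  intro v hv hvu
  set M := Aᵀ * A - lam • (1 : Matrix (Fin n) (Fin n) ℝ) with hMdef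
  have key : ∀ x y : Fin n → ℝ,
      x ⬝ᵥ M.mulVec y = (A.mulVec x) ⬝ᵥ (A.mulVec y) - lam * (x ⬝ᵥ y) := by
    intro x y
    simp [hMdef, Matrix.sub_mulVec, Matrix.smul_mulVec, Matrix.one_mulVec,
      dotProduct_sub, dotProduct_smul, ← Matrix.mulVec_mulVec,
      Matrix.dotProduct_mulVec, Matrix.vecMul_transpose, smul_eq_mul]
  have hv2 : v ⬝ᵥ v = 1 := by rw [← euclNorm_sq, hv]; norm_num
  have hne : v - u ≠ 0 := sub_ne_zero.mpr hvu
  have hpos := hpd (v - u) hne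
  rw [key] at hpos
  have hAsub : A.mulVec (v - u) = A.mulVec v - A.mulVec u := Matrix.mulVec_sub A v u
  rw [hAsub] at hpos
  -- consequences of KKT
  have hkkt' : ∀ x : Fin n → ℝ,
      (A.mulVec x) ⬝ᵥ (A.mulVec u) - lam * (x ⬝ᵥ u) = (A.mulVec x) ⬝ᵥ b := by
    intro x
    rw [← key, hKKT, Matrix.dotProduct_mulVec, Matrix.vecMul_transpose]
  have h1 := hkkt' v
  have h2 := hkkt' u
  rw [euclNorm_sq, euclNorm_sq]
  have e1 : (A.mulVec v - A.mulVec u) ⬝ᵥ (A.mulVec v - A.mulVec u) =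
      A.mulVec v ⬝ᵥ A.mulVec v - 2 * (A.mulVec v ⬝ᵥ A.mulVec u) + A.mulVec u ⬝ᵥ A.mulVec u := by
    simp [dotProduct_sub, sub_dotProduct, dotProduct_comm (A.mulVec u) (A.mulVec v)]
    ring
  have e2 : (v - u) ⬝ᵥ (v - u) = v ⬝ᵥ v - 2 * (v ⬝ᵥ u) + u ⬝ᵥ u := by
    simp [dotProduct_sub, sub_dotProduct, dotProduct_comm u v]
    ring
  have e3 : (A.mulVec v - b) ⬝ᵥ (A.mulVec v - b) =
      A.mulVec v ⬝ᵥ A.mulVec v - 2 * (A.mulVec v ⬝ᵥ b) + b ⬝ᵥ b := by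
    simp [dotProduct_sub, sub_dotProduct, dotProduct_comm b (A.mulVec v)]
    ring
  have e4 : (A.mulVec u - b) ⬝ᵥ (A.mulVec u - b) =
      A.mulVec u ⬝ᵥ A.mulVec u - 2 * (A.mulVec u ⬝ᵥ b) + b ⬝ᵥ b := by
    simp [dotProduct_sub, sub_dotProduct, dotProduct_comm b (A.mulVec u)]
    ring
  rw [e1, e2, hv2, hu] at hpos
  rw [e3, e4]
  rw [hu] at h2
  linarith [hpos, h1, h2]
end
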